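/- Let F be a linearly ordered field with integer part I, where I is Bézout, and let ρ, σ ∈ F be rationals with ρ, σ > 1. If N_ρ ⊆ N_σ, then there exist a, b ∈ I^{≥0} such that a·ρ^{−1} + b·(1 − σ^{−1}) = 1. -/

import Mathlib

set_option maxHeartbeats 2000000

/-- `N_α`: the set `{⌊n·α⌋ : n ∈ I, n ≥ 0}`, where `fl` is the floor function
associated to the integer part `I` of `F`. -/
def Nset {F : Type*} [Field F] [LinearOrder F] [IsStrictOrderedRing F] (I : Subring F) (fl : F → F) (α : F) : Set F :=
  {y | ∃ n, n ∈ I ∧ 0 ≤ n ∧ y = fl (n * α)}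

/-- An element of `F` is rational (with respect to `I`) if it lies in the
fraction field of `I` viewed inside `F`. -/
def IsRat {F : Type*} [Field F] [LinearOrder F] [IsStrictOrderedRing F] (I : Subring F) (α : F) : Prop :=
  ∃ p ∈ I, ∃ q ∈ I, q ≠ 0 ∧ α = p / q

/-- `I` is Bézout: for all nonzero `m, n ∈ I` there are `r, s ∈ I` with
`r·m + s·n ≥ 1` and `r·m + s·n` dividing both `m` and `n` (in `I`). -/
def IsBezoutIP {F : Type*} [Field F] [LinearOrder F] [IsStrictOrderedRing F] (I : Subring F) : Prop :=
  ∀ m ∈ I, ∀ n ∈ I, m ≠ 0 → n ≠ 0 →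
    ∃ r ∈ I, ∃ s ∈ I, 1 ≤ r * m + s * n ∧
      (∃ u ∈ I, m = (r * m + s * n) * u) ∧ (∃ v ∈ I, n = (r * m + s * n) * v)

theorem stmt_13 {F : Type*} [Field F] [LinearOrder F] [IsStrictOrderedRing F] (I : Subring F) (fl : F → F)
    (hdisc : ∀ x ∈ I, ¬(0 < x ∧ x < 1))
    (hfl : ∀ x : F, fl x ∈ I ∧ fl x ≤ x ∧ x < fl x + 1)
    (hBez : IsBezoutIP I)
    (ρ σ : F) (hρ1 : 1 < ρ) (hσ1 : 1 < σ)
    (hρrat : IsRat I ρ) (hσrat : IsRat I σ)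
    (hsub : Nset I fl ρ ⊆ Nset I fl σ) :
    ∃ a ∈ I, ∃ b ∈ I, 0 ≤ a ∧ 0 ≤ b ∧ a * ρ⁻¹ + b * (1 - σ⁻¹) = 1 := by
  -- discreteness step
  have step : ∀ x : F, x ∈ I → 0 < x → 1 ≤ x := by
    intro x hx h0
    by_contra hlt
    exact hdisc x hx ⟨h0, lt_of_not_ge hlt⟩
  -- positivity transfer helper
  have pos_of : ∀ u w : F, 0 < u → 0 < u * w → 0 < w := by
    intro u w hu huw
    by_contra hle
    push_neg at hle
    have h2 : u * w ≤ u * 0 := mul_le_mul_of_nonneg_left hle (le_of_lt hu)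
    rw [mul_zero] at h2
    linarith
  -- positive rational representation of ρ
  have hρpos : ∃ p ∈ I, ∃ q ∈ I, 0 < q ∧ ρ = p / q := by
    obtain ⟨p₀, hp₀, q₀, hq₀, hq₀ne, hρeq⟩ := hρrat
    rcases lt_or_gt_of_ne hq₀ne with h | h
    · exact ⟨-p₀, I.neg_mem hp₀, -q₀, I.neg_mem hq₀, by linarith,
        by rw [hρeq, neg_div_neg_eq]⟩
    · exact ⟨p₀, hp₀, q₀, hq₀, h, hρeq⟩
  have hσpos : ∃ p ∈ I, ∃ q ∈ I, 0 < q ∧ σ = p / q := by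
    obtain ⟨p₀, hp₀, q₀, hq₀, hq₀ne, hσeq⟩ := hσrat
    rcases lt_or_gt_of_ne hq₀ne with h | h
    · exact ⟨-p₀, I.neg_mem hp₀, -q₀, I.neg_mem hq₀, by linarith,
        by rw [hσeq, neg_div_neg_eq]⟩
    · exact ⟨p₀, hp₀, q₀, hq₀, h, hσeq⟩
  obtain ⟨p₀, hp₀, q₀, hq₀, hq₀pos, hρeq₀⟩ := hρpos
  have hρ0 : (0:F) < ρ := lt_trans zero_lt_one hρ1
  have hσ0 : (0:F) < σ := lt_trans zero_lt_one hσ1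
  have hp₀pos : 0 < p₀ := by
    have h2 : p₀ = ρ * q₀ := by rw [hρeq₀]; field_simp
    rw [h2]; exact mul_pos hρ0 hq₀pos
  obtain ⟨α, hα, β, hβ, hg1, ⟨p, hpI, hpe⟩, ⟨q, hqI, hqe⟩⟩ :=
    hBez p₀ hp₀ q₀ hq₀ (ne_of_gt hp₀pos) (ne_of_gt hq₀pos)
  set g := α * p₀ + β * q₀ with hgdef
  have hg0 : 0 < g := by linarith
  have hq0 : 0 < q := pos_of g q hg0 (by rw [← hqe]; exact hq₀pos)
  have hρeq : ρ = p / q := by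
    rw [hρeq₀, hpe, hqe, mul_div_mul_left _ _ (ne_of_gt hg0)]
  have hαβ : α * p + β * q = 1 := by
    refine mul_left_cancel₀ (ne_of_gt hg0) ?_
    rw [mul_one]
    linear_combination (-α) * hpe + (-β) * hqe + (-1) * hgdef
  have hq1 : 1 ≤ q := step q hqI hq0
  have hp0 : 0 < p := by
    have h2 : p = ρ * q := by rw [hρeq]; field_simp
    rw [h2]; exact mul_pos hρ0 hq0
  have hqp : q < p := by
    have hpq' : p = ρ * q := by rw [hρeq]; field_simp
    have h' := mul_lt_mul_of_pos_right hρ1 hq0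
    rw [one_mul] at h'
    linarith
  -- coprime representation of σ
  obtain ⟨s₀, hs₀, t₀, ht₀, ht₀pos, hσeq₀⟩ := hσpos
  have hs₀pos : 0 < s₀ := by
    have h2 : s₀ = σ * t₀ := by rw [hσeq₀]; field_simp
    rw [h2]; exact mul_pos hσ0 ht₀pos
  obtain ⟨c₁, hc₁, c₂, hc₂, hg1', ⟨s, hsI, hse⟩, ⟨t, htI, hte⟩⟩ :=
    hBez s₀ hs₀ t₀ ht₀ (ne_of_gt hs₀pos) (ne_of_gt ht₀pos)
  set g' := c₁ * s₀ + c₂ * t₀ with hg'def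
  have hg'0 : 0 < g' := by linarith
  have ht0 : 0 < t := pos_of g' t hg'0 (by rw [← hte]; exact ht₀pos)
  have hσeq : σ = s / t := by
    rw [hσeq₀, hse, hte, mul_div_mul_left _ _ (ne_of_gt hg'0)]
  have hc : c₁ * s + c₂ * t = 1 := by
    refine mul_left_cancel₀ (ne_of_gt hg'0) ?_
    rw [mul_one]
    linear_combination (-c₁) * hse + (-c₂) * hte + (-1) * hg'def
  have ht1 : 1 ≤ t := step t htI ht0
  have hs0 : 0 < s := by
    have h2 : s = σ * t := by rw [hσeq]; field_simp
    rw [h2]; exact mul_pos hσ0 ht0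
  have hts : t < s := by
    have hst' : s = σ * t := by rw [hσeq]; field_simp
    have h' := mul_lt_mul_of_pos_right hσ1 ht0
    rw [one_mul] at h'
    linarith
  have hw1 : 1 ≤ s - t := step (s - t) (I.sub_mem hsI htI) (by linarith)
  -- d = gcd(p*t, s)
  obtain ⟨r₃, hr₃, s₃, hs₃, hd1, ⟨τ, hτI, hτe⟩, ⟨s₁, hs₁I, hs₁e⟩⟩ :=
    hBez (p * t) (I.mul_mem hpI htI) s hsI (ne_of_gt (mul_pos hp0 ht0)) (ne_of_gt hs0)
  set d := r₃ * (p * t) + s₃ * s with hddef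
  have hd0 : 0 < d := by linarith
  have hpt : p * t = d * τ := hτe
  have hs1 : s = d * s₁ := hs₁e
  have hτ0 : 0 < τ := pos_of d τ hd0 (by rw [← hpt]; exact mul_pos hp0 ht0)
  have hs₁0 : 0 < s₁ := pos_of d s₁ hd0 (by rw [← hs1]; exact hs0)
  have hcomb3 : r₃ * τ + s₃ * s₁ = 1 := by
    refine mul_left_cancel₀ (ne_of_gt hd0) ?_
    rw [mul_one]
    linear_combination (-r₃) * hτe + (-s₃) * hs₁e + (-1) * hddef
  -- d divides p
  set P := c₁ * p * s₁ + c₂ * τ with hPdef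
  have hPI : P ∈ I := I.add_mem (I.mul_mem (I.mul_mem hc₁ hpI) hs₁I) (I.mul_mem hc₂ hτI)
  have hP : p = d * P := by
    rw [hPdef]
    linear_combination (c₁ * p) * hs1 + c₂ * hpt + (-p) * hc
  have hP0 : 0 < P := pos_of d P hd0 (by rw [← hP]; exact hp0)
  -- floor uniqueness helper
  have funiq : ∀ (M z : F), M ∈ I → M ≤ z → z < M + 1 → fl z = M := by
    intro M z hMI hle hlt
    obtain ⟨hflI, hfle, hflt⟩ := hfl z
    rcases lt_trichotomy (fl z) M with h | h | h
    · exact absurd ⟨by linarith, by linarith⟩ (hdisc (M - fl z) (I.sub_mem hMI hflI))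
    · exact h
    · exact absurd ⟨by linarith, by linarith⟩ (hdisc (fl z - M) (I.sub_mem hflI hMI))
  -- THE CORE CLAIM
  have core : ∀ a b D : F, a ∈ I → b ∈ I → D ∈ I → 0 < a → a + t ≤ s → 0 ≤ b → b < q →
      q * a + t * b = d * D → False := by
    intro a b D haI hbI hDI ha0 hats hb0 hbq hqatb
    obtain ⟨hg₀I, hg₀le, hg₀lt⟩ := hfl (α * b / q)
    set g₀ := fl (α * b / q) with hg₀def
    set j := α * b - q * g₀ with hjdef
    have hjI : j ∈ I := I.sub_mem (I.mul_mem hα hbI) (I.mul_mem hqI hg₀I)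
    have hj0 : 0 ≤ j := by
      have h2 := (le_div_iff₀ hq0).mp hg₀le
      rw [hjdef]; linarith
    have hjq : j < q := by
      have h2 := (div_lt_iff₀ hq0).mp hg₀lt
      rw [hjdef]; linarith
    set f := -(β * b) - g₀ * p with hfdef
    have hfI : f ∈ I := I.sub_mem (I.neg_mem (I.mul_mem hβ hbI)) (I.mul_mem hg₀I hpI)
    have hqf : q * f = j * p - b := by
      rw [hfdef, hjdef]; linear_combination (-b) * hαβ
    have hf0 : 0 ≤ f := by
      have hjp : 0 ≤ j * p := mul_nonneg hj0 (le_of_lt hp0)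
      have hf1 : 0 < q * (f + 1) := by linarith [hqf]
      have hf2 : 0 < f + 1 := pos_of q (f + 1) hq0 hf1
      have := step (f + 1) (I.add_mem hfI I.one_mem) hf2
      linarith
    set h := α * P * (t * f - a) + β * (j * τ - D) with hhdef
    have hhI : h ∈ I := I.add_mem
      (I.mul_mem (I.mul_mem hα hPI) (I.sub_mem (I.mul_mem htI hfI) haI))
      (I.mul_mem hβ (I.sub_mem (I.mul_mem hjI hτI) hDI))
    have hthm : t * f - a = d * h := by
      rw [hhdef]
      linear_combination (β * t) * hqf + (β * j) * hpt + (-β) * hqatb +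
        (-(t * f - a)) * hαβ + (α * (t * f - a)) * hP
    obtain ⟨hg₁I, hg₁le, hg₁lt⟩ := hfl ((-h) * r₃ / s₁)
    set g₁ := fl ((-h) * r₃ / s₁) with hg₁def
    set k := (-h) * r₃ - s₁ * g₁ with hkdef
    have hkI : k ∈ I := I.sub_mem (I.mul_mem (I.neg_mem hhI) hr₃) (I.mul_mem hs₁I hg₁I)
    have hk0 : 0 ≤ k := by
      have h2 := (le_div_iff₀ hs₁0).mp hg₁le
      rw [hkdef]; linarith
    set K := h * s₃ - τ * g₁ with hKdef
    have hKI : K ∈ I := I.sub_mem (I.mul_mem hhI hs₃) (I.mul_mem hτI hg₁I)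
    have hτk : τ * k + h = s₁ * K := by
      rw [hKdef, hkdef]; linear_combination (-h) * hcomb3
    set n := k * q + j with hndef
    have hnI : n ∈ I := I.add_mem (I.mul_mem hkI hqI) hjI
    have hn0 : 0 ≤ n := by
      have h2 : 0 ≤ k * q := mul_nonneg hk0 (le_of_lt hq0)
      rw [hndef]; linarith
    set M := k * p + f with hMdef
    have hMI : M ∈ I := I.add_mem (I.mul_mem hkI hpI) hfI
    have hd1' : n * p - M * q = b := by
      rw [hndef, hMdef]; linear_combination (-1) * hqf
    have hnρ1 : M ≤ n * ρ := by
      rw [hρeq, ← mul_div_assoc, le_div_iff₀ hq0]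
      linarith
    have hnρ2 : n * ρ < M + 1 := by
      rw [hρeq, ← mul_div_assoc, div_lt_iff₀ hq0]
      linarith
    have hflM : fl (n * ρ) = M := funiq M (n * ρ) hMI hnρ1 hnρ2
    obtain ⟨n', hn'I, hn'0, heq'⟩ := hsub ⟨n, hnI, hn0, rfl⟩
    rw [hflM] at heq'
    obtain ⟨hfl'I, hfl'le, hfl'lt⟩ := hfl (n' * σ)
    rw [← heq'] at hfl'le hfl'lt
    have hTM : t * M = s * K + a := by
      rw [hMdef]
      linear_combination k * hpt + hthm + d * hτk + (-K) * hs1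
    have h1 : M * t ≤ n' * s := by
      rw [hσeq, ← mul_div_assoc] at hfl'le
      exact (le_div_iff₀ ht0).mp hfl'le
    have h2 : n' * s < (M + 1) * t := by
      rw [hσeq, ← mul_div_assoc] at hfl'lt
      exact (div_lt_iff₀ ht0).mp hfl'lt
    have hKn : K < n' := by
      have hsK : s * K < n' * s := by linarith
      by_contra hle
      push_neg at hle
      have h3 : n' * s ≤ K * s := mul_le_mul_of_nonneg_right hle (le_of_lt hs0)
      linarith
    have hKn1 : 1 ≤ n' - K := step (n' - K) (I.sub_mem hn'I hKI) (by linarith)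
    have hprod : 0 ≤ (n' - K - 1) * s :=
      mul_nonneg (by linarith) (le_of_lt hs0)
    linarith
  -- main lattice argument
  set v := -(q * c₂) with hvdef
  have hvI : v ∈ I := I.neg_mem (I.mul_mem hqI hc₂)
  set e := -(q * s₁ * (c₁ + c₂)) with hedef
  have heI : e ∈ I := I.neg_mem (I.mul_mem (I.mul_mem hqI hs₁I) (I.add_mem hc₁ hc₂))
  have hde : d * e = (s - t) * v - q := by
    rw [hedef, hvdef]
    linear_combination (q * (c₁ + c₂)) * hs1 + (-q) * hc
  -- Bezout of e and (s-t)
  have hbez2 : ∃ γ ∈ I, ∃ δ ∈ I, 1 ≤ γ * e + δ * (s - t) ∧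
      (∃ e₂ ∈ I, e = (γ * e + δ * (s - t)) * e₂) ∧
      (∃ w₂ ∈ I, s - t = (γ * e + δ * (s - t)) * w₂) := by
    by_cases he0 : e = 0
    · refine ⟨0, I.zero_mem, 1, I.one_mem, by rw [he0]; linarith,
        ⟨0, I.zero_mem, by rw [he0]; ring⟩, ⟨1, I.one_mem, by rw [he0]; ring⟩⟩
    · exact hBez e heI (s - t) (I.sub_mem hsI htI) he0 (by linarith)
  obtain ⟨γ, hγ, δ, hδ, hh1, ⟨e₂, he₂I, hee₂⟩, ⟨w₂, hw₂I, hww₂⟩⟩ := hbez2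
  set h := γ * e + δ * (s - t) with hhdef
  have hhI : h ∈ I := I.add_mem (I.mul_mem hγ heI) (I.mul_mem hδ (I.sub_mem hsI htI))
  have hh0 : 0 < h := by linarith
  set b₀ := w₂ * v - e₂ * d with hb₀def
  have hb₀I : b₀ ∈ I := I.sub_mem (I.mul_mem hw₂I hvI) (I.mul_mem he₂I
    (I.add_mem (I.mul_mem hr₃ (I.mul_mem hpI htI)) (I.mul_mem hs₃ hsI)))
  have hqhb : q = h * b₀ := by
    rw [hb₀def]
    calc q = (s - t) * v - d * e := by linarith [hde]
    _ = (h * w₂) * v - d * (h * e₂) := by rw [← hww₂, ← hee₂]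
    _ = h * (w₂ * v - e₂ * d) := by ring
  have hb₀0 : 0 < b₀ := pos_of h b₀ hh0 (by rw [← hqhb]; exact hq0)
  have hw₂0 : 0 < w₂ := pos_of h w₂ hh0 (by rw [← hww₂]; linarith)
  -- h = 1
  have hhone : h = 1 := by
    by_contra hne
    have hne1 : 1 < h := hh1.lt_of_ne (Ne.symm hne)
    have hh2 : 2 ≤ h := by
      have := step (h - 1) (I.sub_mem hhI I.one_mem) (by linarith)
      linarith
    refine core w₂ b₀ (b₀ * s₁) hw₂I hb₀I (I.mul_mem hb₀I hs₁I) hw₂0 ?_ (le_of_lt hb₀0) ?_ ?_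
    · have h3 : (1:F) * w₂ ≤ h * w₂ := mul_le_mul_of_nonneg_right (by linarith) (le_of_lt hw₂0)
      rw [one_mul] at h3
      linarith [hww₂]
    · have h3 : (2:F) * b₀ ≤ h * b₀ := mul_le_mul_of_nonneg_right hh2 (le_of_lt hb₀0)
      linarith [hqhb]
    · calc q * w₂ + t * b₀ = (h * b₀) * w₂ + t * b₀ := by rw [← hqhb]
      _ = b₀ * ((h * w₂) + t) := by ring
      _ = b₀ * (s - t + t) := by rw [← hww₂]
      _ = b₀ * (d * s₁) := by rw [← hs1]; ring
      _ = d * (b₀ * s₁) := by ring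
  rw [hhone] at hhdef
  have hγδ : γ * e + δ * (s - t) = 1 := hhdef.symm
  set y := v * γ + δ * d with hydef
  have hyI : y ∈ I := I.add_mem (I.mul_mem hvI hγ) (I.mul_mem hδ
    (I.add_mem (I.mul_mem hr₃ (I.mul_mem hpI htI)) (I.mul_mem hs₃ hsI)))
  have hdet : (s - t) * y - q * γ = d := by
    rw [hydef]
    linear_combination (-γ) * hde + d * hγδ
  obtain ⟨hg₂I, hg₂le, hg₂lt⟩ := hfl (y / q)
  set g₂ := fl (y / q) with hg₂def
  set y' := y - q * g₂ with hy'def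
  have hy'I : y' ∈ I := I.sub_mem hyI (I.mul_mem hqI hg₂I)
  have hy'0 : 0 ≤ y' := by
    have h2 := (le_div_iff₀ hq0).mp hg₂le
    rw [hy'def]; linarith
  have hy'q : y' < q := by
    have h2 := (div_lt_iff₀ hq0).mp hg₂lt
    rw [hy'def]; linarith
  set x' := γ - (s - t) * g₂ with hx'def
  have hx'I : x' ∈ I := I.sub_mem hγ (I.mul_mem (I.sub_mem hsI htI) hg₂I)
  have hdet' : (s - t) * y' - q * x' = d := by
    rw [hy'def, hx'def]; linear_combination hdet
  have hx'0 : x' ≤ 0 := by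
    by_contra hpos
    push_neg at hpos
    have hy'1 : y' ≤ q - 1 := by
      have := step (q - y') (I.sub_mem hqI hy'I) (by linarith)
      linarith
    have hx'w : x' + t ≤ s := by
      have hqx' : q * x' = (s - t) * y' - d := by linarith
      have h3 : (s - t) * y' ≤ (s - t) * (q - 1) :=
        mul_le_mul_of_nonneg_left hy'1 (by linarith)
      have h4 : q * x' < q * (s - t) := by linarith
      have h5 := (mul_lt_mul_iff_right₀ hq0).mp h4
      linarith
    exact core x' y' (y' * s₁ - 1) hx'I hy'I
      (I.sub_mem (I.mul_mem hy'I hs₁I) I.one_mem) hpos hx'w hy'0 hy'q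
      (by linear_combination (-1) * hdet' + y' * hs1)
  refine ⟨P * (-x'), I.mul_mem hPI (I.neg_mem hx'I), s₁ * y', I.mul_mem hs₁I hy'I,
    mul_nonneg (le_of_lt hP0) (by linarith), mul_nonneg (le_of_lt hs₁0) hy'0, ?_⟩
  rw [hρeq, hσeq, inv_div, inv_div]
  have hpne : p ≠ 0 := ne_of_gt hp0
  have hsne : s ≠ 0 := ne_of_gt hs0
  field_simp
  linear_combination (d * P * s₁) * hdet' + (s₁ * y' * (s - t) - s) * hP +
    (-(P * x' * q) - d * P) * hs1
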